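/- Let B be a regular Bohr set in a finite abelian group G with normalized measure β (the uniform probability measure on B). Then for any κ > 0 and ρ ≤ 1/(C·h(B)) (C the regularity constant), every character γ with |β̂(γ)| ≥ κ satisfies |1−γ(x)| = O(h(B)·ρ/κ) for all x ∈ B_ρ. -/

import Mathlib

open Finset

/-- The Bohr set with frequency set `Γ`, width function `δ`, dilated by `ρ`. -/
def bohr {G : Type} [AddCommGroup G] (Γ : Finset (AddChar G ℂ))
    (δ : AddChar G ℂ → ℝ) (ρ : ℝ) : Set G :=
  {x | ∀ γ ∈ Γ, ‖1 - γ x‖ ≤ min (ρ * δ γ) 2}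

/-- Green-Konyagin: large Fourier coefficients of the normalised measure of a regular Bohr
set are approximately annihilated on small dilates of the Bohr set. -/
theorem large_fourier_coeff_annihilated :
    ∀ C : ℝ, 0 < C → ∃ D : ℝ, 0 < D ∧
      ∀ (G : Type) [AddCommGroup G] [Fintype G]
        (Γ : Finset (AddChar G ℂ)) (δ : AddChar G ℂ → ℝ),
        (∀ γ ∈ Γ, 0 < δ γ ∧ δ γ ≤ 2) →
        ∀ h : ℝ,
          h = Real.log (((bohr Γ δ 2).ncard : ℝ) / ((bohr Γ δ (1/2)).ncard : ℝ)) →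
          -- `B = bohr Γ δ 1` is `C`-regular:
          (∀ η : ℝ, C * h * |η| ≤ 1 →
            ((bohr Γ δ 1).ncard : ℝ) / (1 + C * h * |η|)
                ≤ ((bohr Γ δ (1 + η)).ncard : ℝ) ∧
              ((bohr Γ δ (1 + η)).ncard : ℝ)
                ≤ (1 + C * h * |η|) * ((bohr Γ δ 1).ncard : ℝ)) →
          ∀ κ ρ : ℝ, 0 < κ → 0 < ρ → C * h * ρ ≤ 1 →
          ∀ γ : AddChar G ℂ,
            κ ≤ ‖((bohr Γ δ 1).ncard : ℂ)⁻¹ *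
                ∑ x : G, (bohr Γ δ 1).indicator (fun y => starRingEnd ℂ (γ y)) x‖ →
            ∀ x ∈ bohr Γ δ ρ, ‖1 - γ x‖ ≤ D * h * ρ / κ := by
  intro C hC
  refine ⟨2 * C, by positivity, ?_⟩
  intro G _ _ Γ δ hδ h hh hreg κ ρ hκ hρ hChρ γ hγ x hx
  classical
  have hBfin : (bohr Γ δ 1).Finite := Set.toFinite _
  have hTfin : (bohr Γ δ (1 + ρ)).Finite := Set.toFinite _
  set BF := hBfin.toFinset with hBF
  set TF := hTfin.toFinset with hTF
  have habs : ∀ (γ' : AddChar G ℂ) (y : G), ‖γ' y‖ = 1 := by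
    intro γ' y
    exact AddChar.norm_apply γ' y
  -- 0 ∈ B
  have hzero : (0 : G) ∈ bohr Γ δ 1 := by
    intro γ' hγ'
    simp only [AddChar.map_zero_eq_one, sub_self, norm_zero]
    exact le_min (by nlinarith [(hδ γ' hγ').1]) (by norm_num)
  have hn0 : 0 < (bohr Γ δ 1).ncard :=
    (Set.ncard_pos hBfin).2 ⟨0, hzero⟩
  set n : ℝ := ((bohr Γ δ 1).ncard : ℝ) with hn
  have hnpos : (0 : ℝ) < n := by
    rw [hn]; exact_mod_cast hn0
  -- B ⊆ T
  have hBT : bohr Γ δ 1 ⊆ bohr Γ δ (1 + ρ) := by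
    intro y hy γ' hγ'
    refine le_trans (hy γ' hγ') (min_le_min ?_ le_rfl)
    nlinarith [(hδ γ' hγ').1]
  -- translation
  have htrans : ∀ y ∈ bohr Γ δ 1, y + x ∈ bohr Γ δ (1 + ρ) := by
    intro y hy γ' hγ'
    refine le_min ?_ ?_
    · have h1 : ‖1 - γ' (y + x)‖ ≤
          ‖1 - γ' y‖ + ‖1 - γ' x‖ := by
        calc ‖1 - γ' (y + x)‖
            = ‖(1 - γ' y) + γ' y * (1 - γ' x)‖ := by
              rw [AddChar.map_add_eq_mul]; ring_nf
          _ ≤ ‖1 - γ' y‖ + ‖γ' y * (1 - γ' x)‖ :=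
              norm_add_le _ _
          _ = ‖1 - γ' y‖ + ‖1 - γ' x‖ := by
              rw [norm_mul, habs, one_mul]
      have h2 := (hy γ' hγ').trans (min_le_left _ _)
      have h3 := (hx γ' hγ').trans (min_le_left _ _)
      nlinarith
    · calc ‖1 - γ' (y + x)‖ ≤
          ‖(1 : ℂ)‖ + ‖γ' (y + x)‖ := by
            exact norm_sub_le _ _
        _ ≤ 2 := by rw [norm_one, habs]; norm_num
  -- the sums
  set f : G → ℂ := fun y => starRingEnd ℂ (γ y) with hf
  have hfabs : ∀ y, ‖f y‖ = 1 := by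
    intro y; rw [hf]; simp only [Complex.norm_conj]; exact habs γ y
  set S : ℂ := ∑ y ∈ BF, f y with hS
  have hsum : ∑ y : G, (bohr Γ δ 1).indicator f y = S := by
    have h1 : ∑ y : G, (bohr Γ δ 1).indicator f y
        = ∑ y ∈ BF, (bohr Γ δ 1).indicator f y :=
      (Finset.sum_subset (Finset.subset_univ BF) (fun y _ hy =>
        Set.indicator_of_notMem (by rw [hBF, Set.Finite.mem_toFinset] at hy; exact hy) f)).symm
    rw [h1, hS]
    exact Finset.sum_congr rfl fun y hy =>
      Set.indicator_of_mem (by rwa [hBF, Set.Finite.mem_toFinset] at hy) f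
  -- κ n ≤ |S|
  have hκn : κ * n ≤ ‖S‖ := by
    have h2 : ‖((bohr Γ δ 1).ncard : ℂ)⁻¹ *
        ∑ y : G, (bohr Γ δ 1).indicator f y‖ = ‖S‖ / n := by
      rw [hsum, norm_mul, norm_inv, Complex.norm_natCast, hn]
      ring
    rw [h2] at hγ
    exact (le_div_iff₀ hnpos).1 hγ
  -- translated Bohr set
  set B' : Finset G := BF.image (· + x) with hB'
  have hB'card : B'.card = BF.card :=
    Finset.card_image_of_injective _ (add_left_injective x)
  have hB'T : B' ⊆ TF := by
    intro z hz
    rw [hB', Finset.mem_image] at hz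
    obtain ⟨y, hy, rfl⟩ := hz
    rw [hTF, Set.Finite.mem_toFinset]
    exact htrans y (by rwa [hBF, Set.Finite.mem_toFinset] at hy)
  have hBTF : BF ⊆ TF := by
    intro z hz
    rw [hTF, Set.Finite.mem_toFinset]
    exact hBT (by rwa [hBF, Set.Finite.mem_toFinset] at hz)
  set S' : ℂ := ∑ z ∈ B', f z with hS'
  have hS'eq : S' = starRingEnd ℂ (γ x) * S := by
    rw [hS', hB', Finset.sum_image (fun a _ b _ hab => add_left_injective x hab),
      hS, Finset.mul_sum]
    refine Finset.sum_congr rfl fun y _ => ?_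
    rw [hf]
    simp only [AddChar.map_add_eq_mul, map_mul]
    ring
  -- cardinality bounds
  have hcards : ∀ A : Finset G, A ⊆ TF → ∀ A' : Finset G, A' ⊆ TF →
      ‖∑ z ∈ A \ A', f z‖ ≤ (TF.card : ℝ) - (A'.card : ℝ) := by
    intro A hA A' hA'
    have h1 : ‖∑ z ∈ A \ A', f z‖ ≤ ((A \ A').card : ℝ) := by
      refine (norm_sum_le _ _).trans ?_
      rw [Finset.sum_congr rfl fun y _ => hfabs y]
      simp
    refine h1.trans ?_
    have h2 : A \ A' ⊆ TF \ A' := Finset.sdiff_subset_sdiff hA le_rfl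
    have h3 := Finset.card_le_card h2
    rw [Finset.card_sdiff_of_subset hA'] at h3
    have h4 : ((TF.card - A'.card : ℕ) : ℝ) = (TF.card : ℝ) - (A'.card : ℝ) :=
      Nat.cast_sub (Finset.card_le_card hA')
    calc ((A \ A').card : ℝ) ≤ ((TF.card - A'.card : ℕ) : ℝ) := by exact_mod_cast h3
      _ = (TF.card : ℝ) - (A'.card : ℝ) := h4
  have hdiff : ‖S - S'‖ ≤ 2 * ((TF.card : ℝ) - n) := by
    have heq : S - S' = (∑ z ∈ BF \ B', f z) - ∑ z ∈ B' \ BF, f z := by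
      rw [Finset.sum_sdiff_sub_sum_sdiff, hS, hS']
    have hncard : n = (BF.card : ℝ) := by
      rw [hn, Set.ncard_eq_toFinset_card _ hBfin]
    calc ‖S - S'‖
        ≤ ‖∑ z ∈ BF \ B', f z‖ + ‖∑ z ∈ B' \ BF, f z‖ := by
          rw [heq]; exact norm_sub_le _ _
      _ ≤ ((TF.card : ℝ) - (B'.card : ℝ)) + ((TF.card : ℝ) - (BF.card : ℝ)) :=
          add_le_add (hcards BF hBTF B' hB'T) (hcards B' hB'T BF hBTF)
      _ = 2 * ((TF.card : ℝ) - n) := by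
          rw [hB'card, hncard]; ring
  -- regularity bound
  have hTcard : ((TF.card : ℝ)) ≤ (1 + C * h * ρ) * n := by
    have hr := (hreg ρ (by rwa [abs_of_pos hρ])).2
    rw [abs_of_pos hρ] at hr
    have : ((bohr Γ δ (1 + ρ)).ncard : ℝ) = (TF.card : ℝ) := by
      rw [Set.ncard_eq_toFinset_card _ hTfin]
    rw [this] at hr
    exact hr
  -- combine
  have hfactor : ‖S - S'‖ = ‖S‖ * ‖1 - γ x‖ := by
    have : S - S' = S * starRingEnd ℂ (1 - γ x) := by
      rw [hS'eq, map_sub, map_one]; ring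
    rw [this, norm_mul, Complex.norm_conj]
  have hmain : κ * n * ‖1 - γ x‖ ≤ 2 * (C * h * ρ) * n := by
    calc κ * n * ‖1 - γ x‖
        ≤ ‖S‖ * ‖1 - γ x‖ :=
          mul_le_mul_of_nonneg_right hκn (norm_nonneg _)
      _ = ‖S - S'‖ := hfactor.symm
      _ ≤ 2 * ((TF.card : ℝ) - n) := hdiff
      _ ≤ 2 * (C * h * ρ) * n := by nlinarith
  rw [le_div_iff₀ hκ]
  nlinarith [norm_nonneg (1 - γ x), hmain, hnpos]
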